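/- Let q be a prime power, E ⊆ 𝔽_q², and ξ₁, ξ₂ ∈ 𝔽_q² \ {0}. Then ∑_{λ ∈ 𝔽_q} |Ê(λξ₁)|² |Ê(λξ₂)|² ≤ C|E|³/q⁶ for an absolute constant C. -/

import Mathlib

open Finset

-- orthogonality: sum of character over all ξ
lemma key_orth {Fq : Type} [Field Fq] [Fintype Fq] [DecidableEq Fq]
    (χ : AddChar Fq ℂ) (hχ : χ ≠ 1) (a : Fin 2 → Fq) :
    ∑ ξ : Fin 2 → Fq, χ (∑ i, a i * ξ i) =
      if a = 0 then ((Fintype.card Fq : ℂ)) ^ 2 else 0 := by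
  have hprim := AddChar.IsPrimitive.of_ne_one hχ
  have h1 : ∀ ξ : Fin 2 → Fq, χ (∑ i, a i * ξ i) = ∏ i, χ (a i * ξ i) := by
    intro ξ
    rw [Fin.sum_univ_two, Fin.prod_univ_two, AddChar.map_add_eq_mul]
  simp_rw [h1]
  rw [← Fintype.prod_sum (fun i (t : Fq) => χ (a i * t))]
  have h2 : ∀ i : Fin 2, (∑ t : Fq, χ (a i * t)) =
      if a i = 0 then (Fintype.card Fq : ℂ) else 0 := by
    intro i
    simp_rw [mul_comm (a i)]
    rw [AddChar.sum_mulShift (a i) hprim]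
    split_ifs <;> simp
  simp_rw [h2]
  by_cases h : a = 0
  · simp [h, sq]
  · obtain ⟨i, hi⟩ := Function.ne_iff.mp h
    rw [if_neg h]
    have hi' : a i ≠ 0 := by simpa using hi
    exact Finset.prod_eq_zero (Finset.mem_univ i) (by simp [hi'])

theorem stmt_15 :
    ∃ C : ℝ, 0 < C ∧
      ∀ (Fq : Type) [Field Fq] [Fintype Fq], ∀ (χ : AddChar Fq ℂ), χ ≠ 1 →
        ∀ (E : Finset (Fin 2 → Fq)) (ξ₁ ξ₂ : Fin 2 → Fq), ξ₁ ≠ 0 → ξ₂ ≠ 0 →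
          ∀ (Ehat : (Fin 2 → Fq) → ℂ),
            (∀ ξ, Ehat ξ =
              (∑ x ∈ E, χ (-(∑ i, x i * ξ i))) / (Fintype.card Fq : ℂ) ^ 2) →
            ∑ lam : Fq, ‖Ehat (lam • ξ₁)‖ ^ 2 * ‖Ehat (lam • ξ₂)‖ ^ 2 ≤
              C * (E.card : ℝ) ^ 3 / (Fintype.card Fq : ℝ) ^ 6 := by
  refine ⟨1, one_pos, ?_⟩
  intro Fq _ _ χ hχ E ξ₁ ξ₂ hξ₁ hξ₂ Ehat hE
  classical
  set q : ℕ := Fintype.card Fq with hq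
  have hq0 : 0 < (q : ℝ) := by
    have : 0 < q := Fintype.card_pos
    exact_mod_cast this
  -- trivial bound
  have habs : ∀ ξ, ‖Ehat ξ‖ ≤ (E.card : ℝ) / (q : ℝ) ^ 2 := by
    intro ξ
    rw [hE ξ, norm_div]
    have h1 : ‖(∑ x ∈ E, χ (-(∑ i, x i * ξ i)))‖ ≤ (E.card : ℝ) := by
      calc ‖(∑ x ∈ E, χ (-(∑ i, x i * ξ i)))‖
          ≤ ∑ x ∈ E, ‖χ (-(∑ i, x i * ξ i))‖ := by
            exact norm_sum_le _ _
        _ = (E.card : ℝ) := by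
            simp_rw [AddChar.norm_apply]
            simp
    have h2 : ‖(Fintype.card Fq : ℂ) ^ 2‖ = (q : ℝ) ^ 2 := by
      simp [hq]
    rw [h2]
    exact div_le_div_of_nonneg_right h1 (by positivity) |>.trans_eq rfl
  -- Parseval
  have hconj : ∀ t : Fq, (starRingEnd ℂ) (χ t) = χ (-t) := by
    intro t
    rw [AddChar.map_neg_eq_inv]
    have h1 : ‖χ t‖ = 1 := by
      exact AddChar.norm_apply χ t
    rw [Complex.inv_eq_conj h1]
  have hpar : ∑ ξ : Fin 2 → Fq, ‖Ehat ξ‖ ^ 2 = (E.card : ℝ) / (q : ℝ) ^ 2 := by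
    have key : (∑ ξ : Fin 2 → Fq, (‖Ehat ξ‖ ^ 2 : ℂ))
        = (E.card : ℂ) / (q : ℂ) ^ 2 := by
      have habs2 : ∀ ξ, (‖Ehat ξ‖ ^ 2 : ℂ)
          = Ehat ξ * (starRingEnd ℂ) (Ehat ξ) := by
        intro ξ
        rw [Complex.mul_conj]
        norm_cast
        exact Complex.sq_norm _
      simp_rw [habs2, hE]
      have expand : ∀ ξ : Fin 2 → Fq,
          (∑ x ∈ E, χ (-(∑ i, x i * ξ i))) / (Fintype.card Fq : ℂ) ^ 2 *
            (starRingEnd ℂ) ((∑ x ∈ E, χ (-(∑ i, x i * ξ i))) / (Fintype.card Fq : ℂ) ^ 2)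
          = (∑ x ∈ E, ∑ y ∈ E, χ (∑ i, (y i - x i) * ξ i)) / (q : ℂ) ^ 4 := by
        intro ξ
        rw [map_div₀, map_sum, div_mul_div_comm, Finset.sum_mul_sum]
        congr 1
        · apply Finset.sum_congr rfl; intro x _
          apply Finset.sum_congr rfl; intro y _
          rw [hconj, neg_neg, ← AddChar.map_add_eq_mul]
          congr 1
          rw [neg_add_eq_sub, ← Finset.sum_sub_distrib]
          apply Finset.sum_congr rfl; intro i _
          ring
        · rw [map_pow]
          simp [hq]
          ring
      rw [← hq] at expand
      simp_rw [expand]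
      rw [← Finset.sum_div]
      rw [Finset.sum_comm]
      have inner : ∀ x ∈ E, (∑ ξ : Fin 2 → Fq, ∑ y ∈ E, χ (∑ i, (y i - x i) * ξ i))
          = (q : ℂ) ^ 2 := by
        intro x hx
        rw [Finset.sum_comm]
        have : ∀ y ∈ E, (∑ ξ : Fin 2 → Fq, χ (∑ i, (y i - x i) * ξ i))
            = if (fun i => y i - x i) = 0 then (q : ℂ) ^ 2 else 0 := by
          intro y _
          exact key_orth χ hχ _
        rw [Finset.sum_congr rfl this]
        have heq : ∀ y : Fin 2 → Fq, ((fun i => y i - x i) = 0) ↔ y = x := by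
          intro y
          constructor
          · intro h; funext i
            have := congrFun h i
            simpa [sub_eq_zero] using this
          · intro h; subst h; funext i; simp
        simp_rw [heq]
        rw [Finset.sum_ite_eq' E x (fun _ => (q:ℂ)^2)]
        simp [hx]
      rw [Finset.sum_congr rfl inner, Finset.sum_const, nsmul_eq_mul]
      have hqC : (q : ℂ) ≠ 0 := by exact_mod_cast hq0.ne'
      field_simp
    have := key
    have h2 : ((∑ ξ : Fin 2 → Fq, ‖Ehat ξ‖ ^ 2 : ℝ) : ℂ)
        = (((E.card : ℝ) / (q : ℝ) ^ 2 : ℝ) : ℂ) := by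
      push_cast
      exact key
    exact_mod_cast h2
  -- sum over lam of second factor bounded by full Parseval sum
  have hinj : Function.Injective (fun lam : Fq => lam • ξ₂) := by
    intro a b hab
    obtain ⟨i, hi⟩ := Function.ne_iff.mp hξ₂
    have := congrFun hab i
    simp only [Pi.smul_apply, smul_eq_mul] at this
    exact mul_right_cancel₀ hi this
  have hsum2 : ∑ lam : Fq, ‖Ehat (lam • ξ₂)‖ ^ 2
      ≤ (E.card : ℝ) / (q : ℝ) ^ 2 := by
    rw [← hpar]
    rw [← Finset.sum_image (f := fun ξ => ‖Ehat ξ‖ ^ 2)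
      (g := fun lam : Fq => lam • ξ₂) (by intro a _ b _ h; exact hinj h)]
    apply Finset.sum_le_sum_of_subset_of_nonneg (Finset.subset_univ _)
    intro ξ _ _
    positivity
  have hEq2 : (0:ℝ) ≤ (E.card : ℝ) / (q : ℝ) ^ 2 := by positivity
  calc ∑ lam : Fq, ‖Ehat (lam • ξ₁)‖ ^ 2 * ‖Ehat (lam • ξ₂)‖ ^ 2
      ≤ ∑ lam : Fq, ((E.card : ℝ) / (q : ℝ) ^ 2) ^ 2 * ‖Ehat (lam • ξ₂)‖ ^ 2 := by
        apply Finset.sum_le_sum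
        intro lam _
        apply mul_le_mul_of_nonneg_right _ (by positivity)
        exact pow_le_pow_left₀ (norm_nonneg _) (habs _) 2
    _ = ((E.card : ℝ) / (q : ℝ) ^ 2) ^ 2 * ∑ lam : Fq, ‖Ehat (lam • ξ₂)‖ ^ 2 := by
        rw [Finset.mul_sum]
    _ ≤ ((E.card : ℝ) / (q : ℝ) ^ 2) ^ 2 * ((E.card : ℝ) / (q : ℝ) ^ 2) :=
        mul_le_mul_of_nonneg_left hsum2 (by positivity)
    _ = 1 * (E.card : ℝ) ^ 3 / (q : ℝ) ^ 6 := by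
        field_simp
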